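/- arXiv:1102.2960 — 2 statements merged into one kernel-verified Lean document; each statement's English description precedes it below -/
import Mathlib

section
/- Let B : I → 2^Q and B' : I → 2^Q be two injective functions with the same range. Then |T(n, k, B)| = |T(n, k, B')|; i.e., the number of Mini-increasing sequences with respect to B equals the number of Mini-increasing sequences with respect to B'. -/
/-!
Common definitions. `Q` is a finite set, `I = {1,…,k}` and `B : I → 2^Q`
(modelled as `B : ℕ → Set Q` used on indices in `{1,…,k}`). For a finite
sequence `α` over `I` (a `List ℕ`): `U(α) = ∪_{i} B(α[i])`,
`Cover(α) = { j ∈ I : B(j) ⊆ U(α) }`, and `Mini(α)` is the set of minimal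
(and least-index among ties) extensions. A Mini-increasing sequence is a
nonempty `α` with `α[i] ∈ Mini(α[1..i−1])` for all positions `i`; these are
exactly the non-root nodes of the increasing tree of sets `T(n,k,B)`.
-/

section
variable {Q : Type}

/-- `U(α) = ∪_{i=1}^{|α|} B(α[i])`. -/
def UB (B : ℕ → Set Q) (α : List ℕ) : Set Q := {q | ∃ j ∈ α, q ∈ B j}

/-- `Cover(α) = { j ∈ I : B(j) ⊆ U(α) }` where `I = {1,…,k}`. -/
def Cover (B : ℕ → Set Q) (k : ℕ) (α : List ℕ) : Set ℕ :=
  {j | 1 ≤ j ∧ j ≤ k ∧ B j ⊆ UB B α}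

/-- `Mini(α)`: the `j ∈ I \ Cover(α)` minimally (and with least index among
ties) extending `U(α)`. -/
def Mini (B : ℕ → Set Q) (k : ℕ) (α : List ℕ) : Set ℕ :=
  {j | (1 ≤ j ∧ j ≤ k ∧ j ∉ Cover B k α) ∧
    ∀ j', 1 ≤ j' → j' ≤ k → j' ∉ Cover B k α →
      (j' ≠ j → ¬ (B j' ∪ UB B α ⊂ B j ∪ UB B α)) ∧
      (j' < j → B j' ∪ UB B α ≠ B j ∪ UB B α)}

/-- A Mini-increasing sequence: nonempty, and each entry belongs to `Mini` of
the preceding prefix (0-indexed). -/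
def MiniIncreasing (B : ℕ → Set Q) (k : ℕ) (α : List ℕ) : Prop :=
  α ≠ [] ∧ ∀ i j, α[i]? = some j → j ∈ Mini B k (α.take i)

end

/-!
STATEMENT 11: Let B : I → 2^Q and B' : I → 2^Q be two injective functions
with the same range. Then |T(n, k, B)| = |T(n, k, B')|: the number of
Mini-increasing sequences with respect to B equals the number of
Mini-increasing sequences with respect to B'.
-/

section
variable {Q : Type}

/-- Abstract version of `Cover` with an arbitrary union set `U`. -/
def Cover' (B : ℕ → Set Q) (k : ℕ) (U : Set Q) : Set ℕ :=
  {j | 1 ≤ j ∧ j ≤ k ∧ B j ⊆ U}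

/-- Abstract version of `Mini` with an arbitrary union set `U`. -/
def Mini' (B : ℕ → Set Q) (k : ℕ) (U : Set Q) : Set ℕ :=
  {j | (1 ≤ j ∧ j ≤ k ∧ j ∉ Cover' B k U) ∧
    ∀ j', 1 ≤ j' → j' ≤ k → j' ∉ Cover' B k U →
      (j' ≠ j → ¬ (B j' ∪ U ⊂ B j ∪ U)) ∧
      (j' < j → B j' ∪ U ≠ B j ∪ U)}

lemma mini_eq_mini' (B : ℕ → Set Q) (k : ℕ) (α : List ℕ) :
    Mini B k α = Mini' B k (UB B α) := rfl

lemma notCover' {B : ℕ → Set Q} {k j : ℕ} {U : Set Q} (h1 : 1 ≤ j) (h2 : j ≤ k) :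
    j ∉ Cover' B k U ↔ ¬ B j ⊆ U := by
  simp [Cover', h1, h2]

open Classical in
noncomputable def pick (B' : ℕ → Set Q) (k : ℕ) (U V : Set Q) : ℕ :=
  if h : ∃ m, 1 ≤ m ∧ m ≤ k ∧ B' m ∪ U = V then Nat.find h else 0

open Classical in
lemma pick_spec {B' : ℕ → Set Q} {k : ℕ} {U V : Set Q}
    (h : ∃ m, 1 ≤ m ∧ m ≤ k ∧ B' m ∪ U = V) :
    (1 ≤ pick B' k U V ∧ pick B' k U V ≤ k ∧ B' (pick B' k U V) ∪ U = V)
    ∧ ∀ m < pick B' k U V, ¬ (1 ≤ m ∧ m ≤ k ∧ B' m ∪ U = V) := by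
  rw [pick, dif_pos h]
  exact ⟨Nat.find_spec h, fun m hm => Nat.find_min h hm⟩

/-- If `j ∈ Mini' B k U` then `pick B k U (B j ∪ U) = j`. -/
lemma pick_self {B : ℕ → Set Q} {k j : ℕ} {U : Set Q} (hj : j ∈ Mini' B k U) :
    pick B k U (B j ∪ U) = j := by
  obtain ⟨⟨h1, h2, hnc⟩, htie⟩ := hj
  have hnsub : ¬ B j ⊆ U := (notCover' h1 h2).mp hnc
  have hex : ∃ m, 1 ≤ m ∧ m ≤ k ∧ B m ∪ U = B j ∪ U := ⟨j, h1, h2, rfl⟩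
  classical
  rw [pick, dif_pos hex, Nat.find_eq_iff hex]
  refine ⟨⟨h1, h2, rfl⟩, fun m hm hcontra => ?_⟩
  obtain ⟨hm1, hm2, hmeq⟩ := hcontra
  have hmnsub : ¬ B m ⊆ U := by
    intro hsub
    have hU : B m ∪ U = U := Set.union_eq_right.mpr hsub
    apply hnsub
    have hUeq : U = B j ∪ U := by rw [← hmeq, hU]
    rw [hUeq]; exact Set.subset_union_left
  exact (htie m hm1 hm2 ((notCover' hm1 hm2).mpr hmnsub)).2 hm hmeq

/-- Main transfer lemma: `pick B' k U (B j ∪ U)` lands in `Mini' B' k U` and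
produces the same union. -/
lemma pick_mem_mini' {B B' : ℕ → Set Q} {k : ℕ}
    (hr : ∀ j, 1 ≤ j → j ≤ k → ∃ m, 1 ≤ m ∧ m ≤ k ∧ B' m = B j)
    (hr' : ∀ j, 1 ≤ j → j ≤ k → ∃ m, 1 ≤ m ∧ m ≤ k ∧ B m = B' j)
    {U : Set Q} {j : ℕ} (hj : j ∈ Mini' B k U) :
    pick B' k U (B j ∪ U) ∈ Mini' B' k U ∧
      B' (pick B' k U (B j ∪ U)) ∪ U = B j ∪ U := by
  obtain ⟨⟨h1, h2, hnc⟩, hmin⟩ := hj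
  have hnsub : ¬ B j ⊆ U := (notCover' h1 h2).mp hnc
  have hex : ∃ m, 1 ≤ m ∧ m ≤ k ∧ B' m ∪ U = B j ∪ U := by
    obtain ⟨m, hm1, hm2, hm3⟩ := hr j h1 h2
    exact ⟨m, hm1, hm2, by rw [hm3]⟩
  obtain ⟨⟨hp1, hp2, hpV⟩, hpmin⟩ := pick_spec hex
  set p := pick B' k U (B j ∪ U) with hp
  have hVne : B j ∪ U ≠ U := fun h =>
    hnsub (by rw [← h]; exact Set.subset_union_left)
  have hpnsub : ¬ B' p ⊆ U := by
    intro hsub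
    exact hVne (by rw [← hpV, Set.union_eq_right.mpr hsub])
  refine ⟨⟨⟨hp1, hp2, (notCover' hp1 hp2).mpr hpnsub⟩, ?_⟩, hpV⟩
  intro j' hj1 hj2 hjnc
  have hjnsub : ¬ B' j' ⊆ U := (notCover' hj1 hj2).mp hjnc
  constructor
  · intro _ hss
    rw [hpV] at hss
    obtain ⟨m, hm1, hm2, hm3⟩ := hr' j' hj1 hj2
    have hmnsub : ¬ B m ⊆ U := by rw [hm3]; exact hjnsub
    rw [← hm3] at hss
    rcases eq_or_ne m j with rfl | hne
    · exact absurd hss (lt_irrefl _)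
    · exact (hmin m hm1 hm2 ((notCover' hm1 hm2).mpr hmnsub)).1 hne hss
  · intro hlt heq
    rw [hpV] at heq
    exact hpmin j' hlt ⟨hj1, hj2, heq⟩

/-- `GoodL B k U α`: `α` is Mini-increasing starting from accumulated union `U`. -/
def GoodL (B : ℕ → Set Q) (k : ℕ) : Set Q → List ℕ → Prop
  | _, [] => True
  | U, j :: rest => j ∈ Mini' B k U ∧ GoodL B k (B j ∪ U) rest

noncomputable def transL (B B' : ℕ → Set Q) (k : ℕ) : Set Q → List ℕ → List ℕ
  | _, [] => []
  | U, j :: rest => pick B' k U (B j ∪ U) :: transL B B' k (B j ∪ U) rest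

lemma transL_good {B B' : ℕ → Set Q} {k : ℕ}
    (hr : ∀ j, 1 ≤ j → j ≤ k → ∃ m, 1 ≤ m ∧ m ≤ k ∧ B' m = B j)
    (hr' : ∀ j, 1 ≤ j → j ≤ k → ∃ m, 1 ≤ m ∧ m ≤ k ∧ B m = B' j) :
    ∀ (α : List ℕ) (U : Set Q), GoodL B k U α → GoodL B' k U (transL B B' k U α)
  | [], _, _ => trivial
  | j :: rest, U, ⟨hjm, hrest⟩ => by
    obtain ⟨hmem, hunion⟩ := pick_mem_mini' hr hr' hjm
    exact ⟨hmem, by rw [hunion]; exact transL_good hr hr' rest (B j ∪ U) hrest⟩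

lemma transL_transL {B B' : ℕ → Set Q} {k : ℕ}
    (hr : ∀ j, 1 ≤ j → j ≤ k → ∃ m, 1 ≤ m ∧ m ≤ k ∧ B' m = B j)
    (hr' : ∀ j, 1 ≤ j → j ≤ k → ∃ m, 1 ≤ m ∧ m ≤ k ∧ B m = B' j) :
    ∀ (α : List ℕ) (U : Set Q), GoodL B k U α →
      transL B' B k U (transL B B' k U α) = α
  | [], _, _ => rfl
  | j :: rest, U, ⟨hjm, hrest⟩ => by
    obtain ⟨hmem, hunion⟩ := pick_mem_mini' hr hr' hjm
    show pick B k U (B' (pick B' k U (B j ∪ U)) ∪ U) ::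
        transL B' B k (B' (pick B' k U (B j ∪ U)) ∪ U) (transL B B' k (B j ∪ U) rest)
      = j :: rest
    rw [hunion, pick_self hjm, transL_transL hr hr' rest (B j ∪ U) hrest]

lemma transL_ne_nil {B B' : ℕ → Set Q} {k : ℕ} {U : Set Q} {α : List ℕ}
    (h : α ≠ []) : transL B B' k U α ≠ [] := by
  cases α with
  | nil => exact absurd rfl h
  | cons a l => simp [transL]

lemma UB_nil (B : ℕ → Set Q) : UB B [] = ∅ := by
  ext q; simp [UB]

lemma UB_append_singleton (B : ℕ → Set Q) (β : List ℕ) (j : ℕ) :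
    UB B (β ++ [j]) = B j ∪ UB B β := by
  ext q
  constructor
  · rintro ⟨w, hw, hq⟩
    rcases List.mem_append.mp hw with h | h
    · exact Or.inr ⟨w, h, hq⟩
    · simp at h; subst h; exact Or.inl hq
  · rintro (hq | ⟨w, hw, hq⟩)
    · exact ⟨j, by simp, hq⟩
    · exact ⟨w, by simp [hw], hq⟩

lemma mi_aux (B : ℕ → Set Q) (k : ℕ) :
    ∀ (α β : List ℕ),
      (∀ i j, α[i]? = some j → j ∈ Mini B k (β ++ α.take i)) ↔
        GoodL B k (UB B β) α := by
  intro α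
  induction α with
  | nil => intro β; simp [GoodL]
  | cons a rest ih =>
    intro β
    constructor
    · intro h
      have h0 : a ∈ Mini B k β := by
        have := h 0 a (by simp)
        simpa using this
      refine ⟨h0, ?_⟩
      have : UB B (β ++ [a]) = B a ∪ UB B β := UB_append_singleton B β a
      rw [← this]
      rw [← ih (β ++ [a])]
      intro i j hij
      have := h (i + 1) j (by simpa using hij)
      simpa [List.append_assoc] using this
    · rintro ⟨h0, hrest⟩
      intro i j hij
      cases i with
      | zero =>
        simp at hij
        subst hij
        simpa [mini_eq_mini'] using h0
      | succ i' =>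
        rw [← UB_append_singleton B β a, ← ih (β ++ [a])] at hrest
        have := hrest i' j (by simpa using hij)
        simpa [List.append_assoc] using this

lemma mi_iff_good (B : ℕ → Set Q) (k : ℕ) (α : List ℕ) :
    MiniIncreasing B k α ↔ α ≠ [] ∧ GoodL B k ∅ α := by
  unfold MiniIncreasing
  rw [show (∅ : Set Q) = UB B [] from (UB_nil B).symm, ← mi_aux B k α []]
  simp

end

theorem miniIncreasing_count_relabel
    {Q : Type} [Fintype Q] (n k : ℕ) (hn : 1 ≤ n) (hk : 1 ≤ k)
    (hcard : Fintype.card Q = n) (B B' : ℕ → Set Q)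
    (hinjB : Set.InjOn B (Set.Icc 1 k))
    (hinjB' : Set.InjOn B' (Set.Icc 1 k))
    (hrange : B '' Set.Icc 1 k = B' '' Set.Icc 1 k) :
    {α : List ℕ | MiniIncreasing B k α}.ncard
      = {α : List ℕ | MiniIncreasing B' k α}.ncard := by
  have hr : ∀ j, 1 ≤ j → j ≤ k → ∃ m, 1 ≤ m ∧ m ≤ k ∧ B' m = B j := by
    intro j h1 h2
    have : B j ∈ B' '' Set.Icc 1 k := by
      rw [← hrange]; exact ⟨j, Set.mem_Icc.mpr ⟨h1, h2⟩, rfl⟩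
    obtain ⟨m, hm, hmeq⟩ := this
    exact ⟨m, (Set.mem_Icc.mp hm).1, (Set.mem_Icc.mp hm).2, hmeq⟩
  have hr' : ∀ j, 1 ≤ j → j ≤ k → ∃ m, 1 ≤ m ∧ m ≤ k ∧ B m = B' j := by
    intro j h1 h2
    have : B' j ∈ B '' Set.Icc 1 k := by
      rw [hrange]; exact ⟨j, Set.mem_Icc.mpr ⟨h1, h2⟩, rfl⟩
    obtain ⟨m, hm, hmeq⟩ := this
    exact ⟨m, (Set.mem_Icc.mp hm).1, (Set.mem_Icc.mp hm).2, hmeq⟩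
  set S : Set (List ℕ) := {α | MiniIncreasing B k α} with hS
  set S' : Set (List ℕ) := {α | MiniIncreasing B' k α} with hS'
  set g : List ℕ → List ℕ := transL B B' k ∅ with hg
  set g' : List ℕ → List ℕ := transL B' B k ∅ with hg'
  have hmaps : ∀ α ∈ S, g α ∈ S' := by
    intro α hα
    obtain ⟨hne, hgood⟩ := (mi_iff_good B k α).mp hα
    exact (mi_iff_good B' k (g α)).mpr
      ⟨transL_ne_nil hne, transL_good hr hr' α ∅ hgood⟩
  have hmaps' : ∀ β ∈ S', g' β ∈ S := by
    intro β hβ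
    obtain ⟨hne, hgood⟩ := (mi_iff_good B' k β).mp hβ
    exact (mi_iff_good B k (g' β)).mpr
      ⟨transL_ne_nil hne, transL_good hr' hr β ∅ hgood⟩
  have hgg : ∀ α ∈ S, g' (g α) = α := by
    intro α hα
    exact transL_transL hr hr' α ∅ ((mi_iff_good B k α).mp hα).2
  have hgg' : ∀ β ∈ S', g (g' β) = β := by
    intro β hβ
    exact transL_transL hr' hr β ∅ ((mi_iff_good B' k β).mp hβ).2
  have himg : g '' S = S' := by
    apply Set.Subset.antisymm
    · rintro _ ⟨α, hα, rfl⟩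
      exact hmaps α hα
    · intro β hβ
      exact ⟨g' β, hmaps' β hβ, hgg' β hβ⟩
  have hinj : Set.InjOn g S := by
    intro a ha b hb hab
    rw [← hgg a ha, ← hgg b hb, hab]
  rw [← himg, Set.ncard_image_of_injOn hinj]
end

section
/- Suppose n ≥ 2, B : I → 2^Q is injective, and for every q ∈ Q the singleton {q} is in the range of B. Then |T(n, k, B)| ≤ 3 · n!. -/
/-!
STATEMENT 13: Suppose n ≥ 2, B : I → 2^Q is injective, and for every q ∈ Q
the singleton {q} is in the range of B. Then |T(n, k, B)| ≤ 3 · n!.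
-/

section myaux
variable {Q : Type}

lemma UB_mono {B : ℕ → Set Q} {l₁ l₂ : List ℕ} (h : ∀ x ∈ l₁, x ∈ l₂) :
    UB B l₁ ⊆ UB B l₂ := by
  rintro q ⟨j, hj, hq⟩; exact ⟨j, h j hj, hq⟩

lemma UB_append {B : ℕ → Set Q} (l : List ℕ) (j : ℕ) :
    UB B (l ++ [j]) = B j ∪ UB B l := by
  ext q
  simp only [UB, Set.mem_setOf_eq, List.mem_append, List.mem_singleton, Set.mem_union]
  constructor
  · rintro ⟨j', h | rfl, hq⟩
    · exact Or.inr ⟨j', h, hq⟩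
    · exact Or.inl hq
  · rintro (hq | ⟨j', h, hq⟩)
    · exact ⟨j, Or.inr rfl, hq⟩
    · exact ⟨j', Or.inl h, hq⟩

lemma mini_inj {B : ℕ → Set Q} {k : ℕ} {β : List ℕ} {j j' : ℕ}
    (hj : j ∈ Mini B k β) (hj' : j' ∈ Mini B k β)
    (h : B j ∪ UB B β = B j' ∪ UB B β) : j = j' := by
  obtain ⟨⟨h1, h2, h3⟩, hm⟩ := hj
  obtain ⟨⟨h1', h2', h3'⟩, hm'⟩ := hj'
  rcases lt_trichotomy j j' with hlt | he | hlt
  · exact absurd h ((hm' j h1 h2 h3).2 hlt)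
  · exact he
  · exact absurd h.symm ((hm j' h1' h2' h3').2 hlt)

lemma mini_exists_q {B : ℕ → Set Q} {k : ℕ}
    (hsing : ∀ q : Q, ∃ j, 1 ≤ j ∧ j ≤ k ∧ B j = {q})
    {β : List ℕ} {j : ℕ} (hj : j ∈ Mini B k β) :
    ∃ q, q ∉ UB B β ∧ B j ∪ UB B β = insert q (UB B β) := by
  obtain ⟨⟨h1, h2, h3⟩, hm⟩ := hj
  have hns : ¬ B j ⊆ UB B β := fun hs => h3 ⟨h1, h2, hs⟩
  obtain ⟨q, hqB, hqU⟩ := Set.not_subset.mp hns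
  obtain ⟨j₀, hj₀1, hj₀2, hj₀B⟩ := hsing q
  refine ⟨q, hqU, ?_⟩
  by_cases he : j₀ = j
  · subst he
    rw [hj₀B, Set.singleton_union]
  · have hnc : j₀ ∉ Cover B k β := by
      rintro ⟨-, -, hs⟩
      exact hqU (hs (by rw [hj₀B]; rfl))
    have hnss := (hm j₀ hj₀1 hj₀2 hnc).1 he
    have hsub : B j₀ ∪ UB B β ⊆ B j ∪ UB B β := by
      rw [hj₀B]
      rintro x (hx | hx)
      · exact Or.inl (by rw [Set.mem_singleton_iff] at hx; exact hx ▸ hqB)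
      · exact Or.inr hx
    have heq : B j₀ ∪ UB B β = B j ∪ UB B β := by
      by_contra hne
      exact hnss (Set.ssubset_iff_subset_ne.mpr ⟨hsub, hne⟩)
    rw [← heq, hj₀B, Set.singleton_union]

open Classical in
noncomputable def newElt [Nonempty Q] (B : ℕ → Set Q) (α : List ℕ) (i : ℕ) : Q :=
  if h : ∃ q, q ∉ UB B (α.take i) ∧
      B (α.getD i 0) ∪ UB B (α.take i) = insert q (UB B (α.take i))
  then h.choose else Classical.arbitrary Q

noncomputable def qList [Nonempty Q] (B : ℕ → Set Q) (α : List ℕ) : List Q :=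
  (List.range α.length).map (newElt B α)

lemma getD_mem_mini {B : ℕ → Set Q} {k : ℕ} {α : List ℕ}
    (hα : MiniIncreasing B k α) {i : ℕ} (hi : i < α.length) :
    α.getD i 0 ∈ Mini B k (α.take i) := by
  have h := hα.2 i α[i] (List.getElem?_eq_getElem hi)
  rwa [List.getD_eq_getElem α 0 hi]

lemma newElt_spec [Nonempty Q] {B : ℕ → Set Q} {k : ℕ}
    (hsing : ∀ q : Q, ∃ j, 1 ≤ j ∧ j ≤ k ∧ B j = {q})
    {α : List ℕ} (hα : MiniIncreasing B k α) {i : ℕ} (hi : i < α.length) :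
    newElt B α i ∉ UB B (α.take i) ∧
      B (α.getD i 0) ∪ UB B (α.take i)
        = insert (newElt B α i) (UB B (α.take i)) := by
  have hm := getD_mem_mini hα hi
  have h := mini_exists_q hsing hm
  rw [newElt, dif_pos h]
  exact h.choose_spec

lemma newElt_mem [Nonempty Q] {B : ℕ → Set Q} {k : ℕ}
    (hsing : ∀ q : Q, ∃ j, 1 ≤ j ∧ j ≤ k ∧ B j = {q})
    {α : List ℕ} (hα : MiniIncreasing B k α) {i : ℕ} (hi : i < α.length) :
    newElt B α i ∈ B (α.getD i 0) := by
  obtain ⟨h1, h2⟩ := newElt_spec hsing hα hi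
  have : newElt B α i ∈ B (α.getD i 0) ∪ UB B (α.take i) := by
    rw [h2]; exact Set.mem_insert _ _
  rcases this with h | h
  · exact h
  · exact absurd h h1

lemma qList_length [Nonempty Q] (B : ℕ → Set Q) (α : List ℕ) :
    (qList B α).length = α.length := by simp [qList]

lemma qList_getElem [Nonempty Q] (B : ℕ → Set Q) (α : List ℕ) {i : ℕ}
    (hi : i < α.length) :
    (qList B α)[i]'(by simpa [qList_length] using hi) = newElt B α i := by
  simp [qList]

lemma newElt_mem_UB_take [Nonempty Q] {B : ℕ → Set Q} {k : ℕ}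
    (hsing : ∀ q : Q, ∃ j, 1 ≤ j ∧ j ≤ k ∧ B j = {q})
    {α : List ℕ} (hα : MiniIncreasing B k α) {l i : ℕ}
    (hli : l < i) (hi : i ≤ α.length) :
    newElt B α l ∈ UB B (α.take i) := by
  have hl : l < α.length := lt_of_lt_of_le hli hi
  refine ⟨α.getD l 0, ?_, newElt_mem hsing hα hl⟩
  rw [List.getD_eq_getElem α 0 hl]
  have hl' : l < (α.take i).length := by
    rw [List.length_take]; omega
  have : (α.take i)[l] = α[l] := List.getElem_take
  rw [← this]
  exact List.getElem_mem hl'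

lemma qList_nodup [Nonempty Q] {B : ℕ → Set Q} {k : ℕ}
    (hsing : ∀ q : Q, ∃ j, 1 ≤ j ∧ j ≤ k ∧ B j = {q})
    {α : List ℕ} (hα : MiniIncreasing B k α) : (qList B α).Nodup := by
  refine List.Nodup.map_on ?_ List.nodup_range
  intro x hx y hy hxy
  rw [List.mem_range] at hx hy
  by_contra hne
  wlog hlt : x < y generalizing x y
  · exact this y hy x hx hxy.symm (Ne.symm hne) (by omega)
  have h1 : newElt B α x ∈ UB B (α.take y) :=
    newElt_mem_UB_take hsing hα hlt (le_of_lt hy)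
  have h2 := (newElt_spec hsing hα hy).1
  rw [hxy] at h1
  exact h2 h1

lemma UB_take_succ {B : ℕ → Set Q} {α : List ℕ} {i : ℕ} (hi : i < α.length) :
    UB B (α.take (i+1)) = B (α.getD i 0) ∪ UB B (α.take i) := by
  rw [List.take_succ, List.getElem?_eq_getElem hi, List.getD_eq_getElem α 0 hi]
  simp only [Option.toList_some]
  exact UB_append _ _

lemma qList_inj [Nonempty Q] {B : ℕ → Set Q} {k : ℕ}
    (hsing : ∀ q : Q, ∃ j, 1 ≤ j ∧ j ≤ k ∧ B j = {q})
    {α α' : List ℕ} (hα : MiniIncreasing B k α) (hα' : MiniIncreasing B k α')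
    (h : qList B α = qList B α') : α = α' := by
  have hlen : α.length = α'.length := by
    have := congrArg List.length h
    simpa [qList_length] using this
  have key : ∀ i, α.take i = α'.take i := by
    intro i
    induction i with
    | zero => simp
    | succ i ih =>
      rcases le_or_gt α.length i with hle | hlt
      · have e1 : α.take i = α := List.take_of_length_le hle
        have e2 : α'.take i = α' := List.take_of_length_le (hlen ▸ hle)
        have heq : α = α' := by rw [← e1, ← e2, ih]
        rw [List.take_of_length_le (le_trans hle (Nat.le_succ i)),
            List.take_of_length_le (by omega : α'.length ≤ i + 1), heq]
      · have hlt' : i < α'.length := hlen ▸ hlt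
        have hm : α.getD i 0 ∈ Mini B k (α.take i) := getD_mem_mini hα hlt
        have hm' : α'.getD i 0 ∈ Mini B k (α.take i) := by
          rw [ih]; exact getD_mem_mini hα' hlt'
        have hs := newElt_spec hsing hα hlt
        have hs' := newElt_spec hsing hα' hlt'
        have hqe : newElt B α i = newElt B α' i := by
          have h2 := congrArg (fun l => l[i]?) h
          change (qList B α)[i]? = (qList B α')[i]? at h2
          rw [List.getElem?_eq_getElem (by rw [qList_length]; exact hlt),
              List.getElem?_eq_getElem (by rw [qList_length]; exact hlt')] at h2
          rw [qList_getElem B α hlt, qList_getElem B α' hlt'] at h2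
          exact Option.some.inj h2
        have hj : α.getD i 0 = α'.getD i 0 := by
          apply mini_inj hm hm'
          rw [hs.2, ih, hs'.2, hqe]
        rw [List.take_succ, List.take_succ, List.getElem?_eq_getElem hlt,
            List.getElem?_eq_getElem hlt', ih]
        congr 1
        simp only [Option.toList_some]
        rw [← List.getD_eq_getElem α 0 hlt, ← List.getD_eq_getElem α' 0 hlt', hj]
  calc α = α.take α.length := (List.take_of_length_le (le_refl _)).symm
    _ = α'.take α'.length := by rw [hlen, key]
    _ = α' := List.take_of_length_le (le_refl _)

lemma ofFn_get_cast {l : List Q} {m : ℕ} (h : m = l.length) :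
    List.ofFn (fun t : Fin m => l.get (Fin.cast h t)) = l := by
  subst h
  simpa using List.ofFn_get l

lemma sum_descFactorial_le (n : ℕ) (hn : 2 ≤ n) :
    (∑ m ∈ Finset.range n, n.descFactorial (m+1)) + 2 ≤ 3 * n.factorial := by
  induction n, hn using Nat.le_induction with
  | base => decide
  | succ n hn ih =>
    have key : (∑ m ∈ Finset.range (n+1), (n+1).descFactorial (m+1))
        = (n+1) * ((∑ m ∈ Finset.range n, n.descFactorial (m+1)) + 1) := by
      have e1 : ∀ m, (n+1).descFactorial (m+1) = (n+1) * n.descFactorial m :=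
        fun m => Nat.succ_descFactorial_succ n m
      calc (∑ m ∈ Finset.range (n+1), (n+1).descFactorial (m+1))
          = ∑ m ∈ Finset.range (n+1), (n+1) * n.descFactorial m := by
            exact Finset.sum_congr rfl (fun m _ => e1 m)
        _ = (n+1) * ∑ m ∈ Finset.range (n+1), n.descFactorial m := by
            rw [Finset.mul_sum]
        _ = (n+1) * ((∑ m ∈ Finset.range n, n.descFactorial (m+1)) + n.descFactorial 0) := by
            rw [Finset.sum_range_succ']
        _ = (n+1) * ((∑ m ∈ Finset.range n, n.descFactorial (m+1)) + 1) := by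
            rw [Nat.descFactorial_zero]
    calc (∑ m ∈ Finset.range (n+1), (n+1).descFactorial (m+1)) + 2
        ≤ (∑ m ∈ Finset.range (n+1), (n+1).descFactorial (m+1)) + (n+1) := by omega
      _ = (n+1) * ((∑ m ∈ Finset.range n, n.descFactorial (m+1)) + 2) := by
          rw [key]; ring
      _ ≤ (n+1) * (3 * n.factorial) := Nat.mul_le_mul_left _ ih
      _ = 3 * (n+1).factorial := by rw [Nat.factorial_succ]; ring

end myaux


theorem miniIncreasing_count_all_singletons
    {Q : Type} [Fintype Q] (n k : ℕ) (hn : 2 ≤ n) (hk : 1 ≤ k)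
    (hcard : Fintype.card Q = n) (B : ℕ → Set Q)
    (hinjB : Set.InjOn B (Set.Icc 1 k))
    (hsing : ∀ q : Q, ∃ j, 1 ≤ j ∧ j ≤ k ∧ B j = {q}) :
    {α : List ℕ | MiniIncreasing B k α}.ncard ≤ 3 * n.factorial := by
  classical
  have hpos : 0 < n := by omega
  have hQ : Nonempty Q := by
    rw [← Fintype.card_pos_iff, hcard]; exact hpos
  set s := {α : List ℕ | MiniIncreasing B k α} with hsdef
  have hmem : ∀ a : s, MiniIncreasing B k a.1 := fun a => a.2
  have hlen1 : ∀ a : s, 1 ≤ (qList B a.1).length := by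
    intro a
    rw [qList_length]
    exact List.length_pos_iff.mpr (hmem a).1
  have hlenn : ∀ a : s, (qList B a.1).length ≤ n := by
    intro a
    calc (qList B a.1).length ≤ Fintype.card Q :=
          (qList_nodup hsing (hmem a)).length_le_card
      _ = n := hcard
  have hcast : ∀ a : s, (qList B a.1).length - 1 + 1 = (qList B a.1).length :=
    fun a => Nat.succ_pred_eq_of_pos (hlen1 a)
  let F : s → Σ m : Fin n, (Fin (m.1+1) ↪ Q) := fun a =>
    ⟨⟨(qList B a.1).length - 1, by have := hlen1 a; have := hlenn a; omega⟩,
     ⟨fun t => (qList B a.1).get (Fin.cast (hcast a) t),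
      (List.nodup_iff_injective_get.mp (qList_nodup hsing (hmem a))).comp
        (Fin.cast_injective (hcast a))⟩⟩
  have hrec : ∀ a : s, List.ofFn (F a).2 = qList B a.1 := fun a => by
    exact ofFn_get_cast (hcast a)
  have hFinj : Function.Injective F := by
    intro a a' hFa
    have hq : qList B a.1 = qList B a'.1 := by
      rw [← hrec a, ← hrec a']
      exact congrArg (fun p : Σ m : Fin n, (Fin (m.1+1) ↪ Q) => List.ofFn p.2) hFa
    exact Subtype.ext (qList_inj hsing (hmem a) (hmem a') hq)
  have hle : s.ncard ≤ Nat.card (Σ m : Fin n, (Fin (m.1+1) ↪ Q)) := by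
    rw [← Nat.card_coe_set_eq]
    exact Nat.card_le_card_of_injective F hFinj
  have hT : Nat.card (Σ m : Fin n, (Fin (m.1+1) ↪ Q))
      = ∑ m ∈ Finset.range n, n.descFactorial (m+1) := by
    rw [Nat.card_eq_fintype_card, Fintype.card_sigma]
    rw [← Fin.sum_univ_eq_sum_range (fun m => n.descFactorial (m+1)) n]
    refine Finset.sum_congr rfl (fun m _ => ?_)
    rw [Fintype.card_embedding_eq, Fintype.card_fin, hcard]
  have harith := sum_descFactorial_le n hn
  omega
end
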